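/- Let ξ(x) = (1+|x|)^{-(1+β)} for some 0 < β ≤ 1, and set ξ_{n,j}(x) = 2^{n/2} ξ(2^n x - j) for n, j ∈ ℤ. Then there is a constant C (depending only on β) such that for every a > 0 and every n ∈ ℤ one has ∑_{j ∈ ℤ} (∫_{-a}^{a} ξ_{n,j}(t) dt)² ≤ C · a. -/

import Mathlib

open MeasureTheory Set

set_option maxHeartbeats 1000000

/-- Covering multiplicity bound: at any point `x`, the translates `Ioc (b-j) (c-j)` for
`j ∈ F ⊆ ℤ` cover `x` at most `c - b + 1` times. -/
lemma stmt5_cover (ξ : ℝ → ℝ) (hξ0 : ∀ x, 0 ≤ ξ x) (b c : ℝ) (hbc : b ≤ c)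
    (F : Finset ℤ) (x : ℝ) :
    ∑ j ∈ F, (Set.Ioc (b - (j : ℝ)) (c - j)).indicator ξ x ≤ (c - b + 1) * ξ x := by
  classical
  set T : Finset ℤ := Finset.Ioc ⌊b - x⌋ ⌊c - x⌋ with hT
  have hstep : ∀ j ∈ F,
      (Set.Ioc (b - (j : ℝ)) (c - j)).indicator ξ x ≤ if j ∈ T then ξ x else 0 := by
    intro j _
    by_cases hx : x ∈ Set.Ioc (b - (j : ℝ)) (c - j)
    · obtain ⟨h1, h2⟩ := hx
      rw [Set.indicator_of_mem (Set.mem_Ioc.2 ⟨h1, h2⟩), if_pos]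
      rw [hT, Finset.mem_Ioc]
      constructor
      · exact Int.floor_lt.2 (by push_cast; linarith)
      · exact Int.le_floor.2 (by push_cast; linarith)
    · rw [Set.indicator_of_notMem hx]
      split
      · exact hξ0 x
      · exact le_refl 0
  have hcard : (T.card : ℝ) ≤ c - b + 1 := by
    have h1 : (⌊c - x⌋ : ℝ) ≤ c - x := Int.floor_le _
    have h2 : b - x - 1 < (⌊b - x⌋ : ℝ) := Int.sub_one_lt_floor _
    have hc : T.card = (⌊c - x⌋ - ⌊b - x⌋).toNat := Int.card_Ioc _ _
    rw [hc]
    have h3 : ((⌊c - x⌋ - ⌊b - x⌋).toNat : ℤ) = max (⌊c - x⌋ - ⌊b - x⌋) 0 :=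
      Int.toNat_eq_max _
    have h4 : (((⌊c - x⌋ - ⌊b - x⌋).toNat : ℤ) : ℝ) = max ((⌊c - x⌋ : ℝ) - ⌊b - x⌋) 0 := by
      rw [h3]; push_cast; rfl
    have h5 : (((⌊c - x⌋ - ⌊b - x⌋).toNat : ℕ) : ℝ) = (((⌊c - x⌋ - ⌊b - x⌋).toNat : ℤ) : ℝ) := by
      push_cast; rfl
    rw [h5, h4]
    exact max_le (by linarith) (by linarith)
  calc ∑ j ∈ F, (Set.Ioc (b - (j : ℝ)) (c - j)).indicator ξ x
      ≤ ∑ j ∈ F, (if j ∈ T then ξ x else 0) := Finset.sum_le_sum hstep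
    _ = ∑ j ∈ F ∩ T, ξ x := Finset.sum_ite_mem F T fun _ => ξ x
    _ ≤ ∑ j ∈ T, ξ x :=
        Finset.sum_le_sum_of_subset_of_nonneg Finset.inter_subset_right fun _ _ _ => hξ0 x
    _ = (T.card : ℝ) * ξ x := by rw [Finset.sum_const, nsmul_eq_mul]
    _ ≤ (c - b + 1) * ξ x := mul_le_mul_of_nonneg_right hcard (hξ0 x)

/-- For `ξ(x) = (1+|x|)^{-(1+β)}` and `ξ_{n,j}(x) = 2^{n/2} ξ(2^n x - j)`, there is a
constant `C` (depending only on `β`) with `∑_j (∫_{-a}^a ξ_{n,j})² ≤ C a` for all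
`a > 0` and `n ∈ ℤ`. -/
theorem stmt_5 (β : ℝ) (hβ : 0 < β) (hβ1 : β ≤ 1) :
    ∃ C > (0 : ℝ), ∀ a > (0 : ℝ), ∀ n : ℤ,
      ∑' j : ℤ,
        (∫ t in (-a)..a,
          (2 : ℝ) ^ ((n : ℝ) / 2) * (1 + |(2 : ℝ) ^ n * t - (j : ℝ)|) ^ (-(1 + β))) ^ 2
        ≤ C * a := by
  classical
  have hp : (1 : ℝ) < 1 + β := by linarith
  set ξ : ℝ → ℝ := fun x => (1 + |x|) ^ (-(1 + β)) with hξdef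
  have hξ0 : ∀ x : ℝ, 0 ≤ ξ x := fun x => Real.rpow_nonneg (by positivity) _
  have hξpos : ∀ x : ℝ, 0 < ξ x := fun x => Real.rpow_pos_of_pos (by positivity) _
  have hξc : Continuous ξ :=
    (continuous_const.add continuous_abs).rpow_const fun x => Or.inl (by show (1:ℝ) + |x| ≠ 0; positivity)
  have hint : Integrable ξ := by
    have := integrable_one_add_norm (E := ℝ) (μ := volume) (r := 1 + β) (by simpa using hp)
    simpa [hξdef, Real.norm_eq_abs] using this
  set K : ℝ := ∫ x : ℝ, ξ x with hKdef
  have hKpos : 0 < K := by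
    rw [hKdef, integral_pos_iff_support_of_nonneg hξ0 hint]
    have : Function.support ξ = Set.univ :=
      Set.eq_univ_iff_forall.2 fun x => (hξpos x).ne'
    rw [this]
    simp
  -- summability of ξ over the integers
  have hsumN : Summable fun m : ℕ => ξ m := by
    have h0 : Summable fun m : ℕ => ((m : ℝ)) ^ (-(1 + β)) :=
      Real.summable_nat_rpow.2 (by linarith)
    have h1 : Summable fun m : ℕ => (((m + 1 : ℕ) : ℝ)) ^ (-(1 + β)) :=
      (summable_nat_add_iff 1).2 h0
    apply h1.congr
    intro m
    have : ((m + 1 : ℕ) : ℝ) = 1 + |(m : ℝ)| := by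
      rw [abs_of_nonneg (Nat.cast_nonneg m)]; push_cast; ring
    rw [hξdef]; simp only [this]
  have hsum : Summable fun j : ℤ => ξ j := by
    apply Summable.of_nat_of_neg
    · apply hsumN.congr; intro m; simp [hξdef]
    · apply hsumN.congr; intro m; rw [hξdef]; push_cast; rw [abs_neg]
  set Z : ℝ := ∑' j : ℤ, ξ j with hZdef
  have hZ0 : 0 ≤ Z := tsum_nonneg fun j => hξ0 j
  refine ⟨8 * K * Z + 4 * K * K + 1, by positivity, ?_⟩
  intro a ha n
  set P : ℝ := (2 : ℝ) ^ n with hPdef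
  have hPpos : 0 < P := zpow_pos (by norm_num) n
  set r : ℝ := (2 : ℝ) ^ (-((n : ℝ) / 2)) with hrdef
  have hrpos : 0 < r := Real.rpow_pos_of_pos (by norm_num) _
  have hrr : r * r = P⁻¹ := by
    rw [hrdef, hPdef, ← Real.rpow_add (by norm_num), ← Real.rpow_intCast 2 n,
      ← Real.rpow_neg (by norm_num)]
    congr 1
    ring
  have hr2 : r * (2 : ℝ) ^ ((n : ℝ) / 2) = 1 := by
    rw [hrdef, ← Real.rpow_add (by norm_num)]
    simp
  set I : ℤ → ℝ := fun j =>
    ∫ t in (-a)..a, (2 : ℝ) ^ ((n : ℝ) / 2) * (1 + |(2 : ℝ) ^ n * t - (j : ℝ)|) ^ (-(1 + β))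
    with hIdef
  set b : ℝ := P * (-a) with hbdef
  set c : ℝ := P * a with hcdef
  have hbc : b ≤ c := by
    rw [hbdef, hcdef]
    nlinarith
  -- change of variables
  have key : ∀ j : ℤ, I j = r * ∫ x in (b - (j : ℝ))..(c - j), ξ x := by
    intro j
    rw [hIdef]
    simp only
    rw [intervalIntegral.integral_const_mul]
    rw [show (∫ t in (-a)..a, (1 + |(2 : ℝ) ^ n * t - (j : ℝ)|) ^ (-(1 + β)))
        = ∫ t in (-a)..a, ξ ((2 : ℝ) ^ n * t - (j : ℝ)) from rfl]
    rw [intervalIntegral.integral_comp_mul_sub ξ (ne_of_gt hPpos) (j : ℝ)]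
    rw [smul_eq_mul, ← mul_assoc, hbdef, hcdef]
    congr 1
    rw [hrdef, hPdef, ← Real.rpow_intCast 2 n, ← Real.rpow_neg (by norm_num),
      ← Real.rpow_add (by norm_num)]
    congr 1
    ring
  have hIint : ∀ j : ℤ, (∫ x in (b - (j : ℝ))..(c - j), ξ x)
      = ∫ x in Set.Ioc (b - (j : ℝ)) (c - j), ξ x := fun j =>
    intervalIntegral.integral_of_le (by linarith [hbc])
  have hI0 : ∀ j : ℤ, 0 ≤ I j := by
    intro j
    rw [key j, hIint j]
    exact mul_nonneg hrpos.le (setIntegral_nonneg measurableSet_Ioc fun x _ => hξ0 x)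
  have hImax : ∀ j : ℤ, I j ≤ r * K := by
    intro j
    rw [key j, hIint j, hKdef]
    exact mul_le_mul_of_nonneg_left
      (setIntegral_le_integral hint (Filter.Eventually.of_forall hξ0)) hrpos.le
  apply tsum_le_of_sum_le' (by positivity)
  intro F
  by_cases hcase : (1 : ℝ) ≤ P * (2 * a)
  · -- large interval: covering argument
    have hcover : ∑ j ∈ F, ∫ x in Set.Ioc (b - (j : ℝ)) (c - j), ξ x ≤ (c - b + 1) * K := by
      have heq : ∀ j ∈ F, (∫ x in Set.Ioc (b - (j : ℝ)) (c - j), ξ x)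
          = ∫ x, (Set.Ioc (b - (j : ℝ)) (c - j)).indicator ξ x := fun j _ =>
        (integral_indicator measurableSet_Ioc).symm
      rw [Finset.sum_congr rfl heq,
        ← integral_finset_sum F fun j _ => hint.indicator measurableSet_Ioc]
      calc (∫ x, ∑ j ∈ F, (Set.Ioc (b - (j : ℝ)) (c - j)).indicator ξ x)
          ≤ ∫ x, (c - b + 1) * ξ x := by
            apply integral_mono
              (integrable_finset_sum F fun j _ => hint.indicator measurableSet_Ioc)
              (hint.const_mul _)
            intro x
            exact stmt5_cover ξ hξ0 b c hbc F x
        _ = (c - b + 1) * K := by rw [hKdef, MeasureTheory.integral_const_mul]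
    have hsumI : ∑ j ∈ F, I j ≤ r * ((c - b + 1) * K) := by
      have : ∑ j ∈ F, I j = r * ∑ j ∈ F, ∫ x in Set.Ioc (b - (j : ℝ)) (c - j), ξ x := by
        rw [Finset.mul_sum]
        exact Finset.sum_congr rfl fun j _ => by rw [key j, hIint j]
      rw [this]
      exact mul_le_mul_of_nonneg_left hcover hrpos.le
    have hPinv : P⁻¹ ≤ 2 * a := by
      rw [inv_le_iff_one_le_mul₀ hPpos]
      linarith [hcase]
    calc ∑ j ∈ F, (I j) ^ 2 ≤ ∑ j ∈ F, (r * K) * I j := by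
          apply Finset.sum_le_sum
          intro j _
          rw [sq]
          exact mul_le_mul_of_nonneg_right (hImax j) (hI0 j)
      _ = (r * K) * ∑ j ∈ F, I j := by rw [Finset.mul_sum]
      _ ≤ (r * K) * (r * ((c - b + 1) * K)) :=
          mul_le_mul_of_nonneg_left hsumI (by positivity)
      _ = (r * r) * (c - b + 1) * K ^ 2 := by ring
      _ = P⁻¹ * (P * (2 * a) + 1) * K ^ 2 := by
          rw [hrr]
          congr 2
          rw [hbdef, hcdef]
          ring
      _ = (2 * a + P⁻¹) * K ^ 2 := by
          have hne := hPpos.ne'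
          field_simp
      _ ≤ (4 * a) * K ^ 2 :=
          mul_le_mul_of_nonneg_right (by linarith) (sq_nonneg K)
      _ = 4 * K * K * a := by ring
      _ ≤ (8 * K * Z + 4 * K * K + 1) * a := by
          nlinarith [mul_nonneg (mul_nonneg hKpos.le hZ0) ha.le, ha.le]
  · -- small interval: decay of ξ
    push_neg at hcase
    have hPa : P * a < 1 / 2 := by
      have h2 : P * (2 * a) = 2 * (P * a) := by ring
      linarith
    have hpt : ∀ j : ℤ, ∀ t ∈ Set.Icc (-a) a,
        (2 : ℝ) ^ ((n : ℝ) / 2) * (1 + |(2 : ℝ) ^ n * t - (j : ℝ)|) ^ (-(1 + β))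
          ≤ (2 : ℝ) ^ ((n : ℝ) / 2) * (4 * ξ j) := by
      intro j t ht
      apply mul_le_mul_of_nonneg_left _ (Real.rpow_nonneg (by norm_num) _)
      have habs : |(2 : ℝ) ^ n * t| ≤ P * a := by
        rw [abs_mul, hPdef, abs_of_pos (zpow_pos (by norm_num) n)]
        exact mul_le_mul_of_nonneg_left (abs_le.2 ⟨ht.1, ht.2⟩) (zpow_pos (by norm_num) n).le
      have hlow : (1 + |(j : ℝ)|) / 2 ≤ 1 + |(2 : ℝ) ^ n * t - (j : ℝ)| := by
        have h1 : |(j : ℝ)| - |(2 : ℝ) ^ n * t| ≤ |(2 : ℝ) ^ n * t - (j : ℝ)| := by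
          rw [abs_sub_comm]
          exact abs_sub_abs_le_abs_sub _ _
        linarith [abs_nonneg ((j : ℝ)), abs_nonneg ((2 : ℝ) ^ n * t - (j : ℝ))]
      have h2 : (1 + |(2 : ℝ) ^ n * t - (j : ℝ)|) ^ (-(1 + β))
          ≤ ((1 + |(j : ℝ)|) / 2) ^ (-(1 + β)) :=
        Real.rpow_le_rpow_of_nonpos (by positivity) hlow (by linarith)
      have h3 : ((1 + |(j : ℝ)|) / 2) ^ (-(1 + β))
          = (1 + |(j : ℝ)|) ^ (-(1 + β)) * ((2 : ℝ) ^ (-(1 + β)))⁻¹ := by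
        rw [Real.div_rpow (by positivity) (by norm_num)]
        ring
      have h4 : ((2 : ℝ) ^ (-(1 + β)))⁻¹ = (2 : ℝ) ^ (1 + β) := by
        rw [Real.rpow_neg (by norm_num), inv_inv]
      have h5 : (2 : ℝ) ^ (1 + β) ≤ 4 := by
        have : (2 : ℝ) ^ (1 + β) ≤ (2 : ℝ) ^ (2 : ℝ) :=
          Real.rpow_le_rpow_of_exponent_le (by norm_num) (by linarith)
        have h6 : (2 : ℝ) ^ (2 : ℝ) = 4 := by
          rw [show (2 : ℝ) = ((2 : ℕ) : ℝ) from by norm_num, Real.rpow_natCast]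
          norm_num
        linarith
      calc (1 + |(2 : ℝ) ^ n * t - (j : ℝ)|) ^ (-(1 + β))
          ≤ ((1 + |(j : ℝ)|) / 2) ^ (-(1 + β)) := h2
        _ = (1 + |(j : ℝ)|) ^ (-(1 + β)) * (2 : ℝ) ^ (1 + β) := by rw [h3, h4]
        _ ≤ (1 + |(j : ℝ)|) ^ (-(1 + β)) * 4 :=
            mul_le_mul_of_nonneg_left h5 (Real.rpow_nonneg (by positivity) _)
        _ = 4 * ξ j := by rw [hξdef]; ring
    have hIsmall : ∀ j : ℤ, I j ≤ 2 * a * ((2 : ℝ) ^ ((n : ℝ) / 2) * (4 * ξ j)) := by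
      intro j
      rw [hIdef]
      simp only
      have hfc : Continuous fun t : ℝ =>
          (2 : ℝ) ^ ((n : ℝ) / 2) * (1 + |(2 : ℝ) ^ n * t - (j : ℝ)|) ^ (-(1 + β)) := by
        apply continuous_const.mul
        exact hξc.comp ((continuous_const.mul continuous_id).sub continuous_const)
      calc (∫ t in (-a)..a,
            (2 : ℝ) ^ ((n : ℝ) / 2) * (1 + |(2 : ℝ) ^ n * t - (j : ℝ)|) ^ (-(1 + β)))
          ≤ ∫ _t in (-a)..a, (2 : ℝ) ^ ((n : ℝ) / 2) * (4 * ξ j) := by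
            apply intervalIntegral.integral_mono_on (by linarith)
              (hfc.intervalIntegrable _ _) (intervalIntegrable_const)
            exact hpt j
        _ = 2 * a * ((2 : ℝ) ^ ((n : ℝ) / 2) * (4 * ξ j)) := by
            rw [intervalIntegral.integral_const, smul_eq_mul]
            ring
    have hIsq : ∀ j ∈ F, (I j) ^ 2 ≤ 8 * a * K * ξ j := by
      intro j _
      have h1 : (I j) ^ 2 ≤ (r * K) * (2 * a * ((2 : ℝ) ^ ((n : ℝ) / 2) * (4 * ξ j))) := by
        rw [sq]
        exact mul_le_mul (hImax j) (hIsmall j) (hI0 j) (by positivity)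
      calc (I j) ^ 2 ≤ (r * K) * (2 * a * ((2 : ℝ) ^ ((n : ℝ) / 2) * (4 * ξ j))) := h1
        _ = (r * (2 : ℝ) ^ ((n : ℝ) / 2)) * (8 * a * K * ξ j) := by ring
        _ = 8 * a * K * ξ j := by rw [hr2, one_mul]
    calc ∑ j ∈ F, (I j) ^ 2 ≤ ∑ j ∈ F, 8 * a * K * ξ j := Finset.sum_le_sum hIsq
      _ = 8 * a * K * ∑ j ∈ F, ξ j := by rw [Finset.mul_sum]
      _ ≤ 8 * a * K * Z := by
          apply mul_le_mul_of_nonneg_left _ (by positivity)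
          rw [hZdef]
          exact Summable.sum_le_tsum F (fun j _ => hξ0 j) hsum
      _ ≤ (8 * K * Z + 4 * K * K + 1) * a := by
          nlinarith [mul_nonneg (mul_nonneg hKpos.le hKpos.le) ha.le, ha.le]
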